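/- Let 𝟙_m^⊺ diag(L)^{-1} 𝟙_m = 1/L_eq(m), and let Φ⁻¹ ∈ ℝ^{(m+1)×(m+1)} be the block matrix with rows [Γ_m^⊺, 0_{m-1}], [𝟙_m^⊺ diag(L)^{-1} L_eq(m), 0], [0_m^⊺, 1]. Then Φ⁻¹ is invertible, with inverse Φ given in block form by first block column Γ_m^+ := (diag(L)/L_eq(m)) Γ_m (Γ_m^⊺ (diag(L)/L_eq(m)) Γ_m)^{-1}, second block column (𝟙_m, 0)^⊺, third block column (0_m, 1)^⊺. -/

import Mathlib

open Finset Matrix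

/-- `L_eq(k)`: equivalent inductance of coils `0,…,k` in parallel. -/
noncomputable def Leq {n : ℕ} (L : Fin (n + 1) → ℝ) (k : Fin (n + 1)) : ℝ :=
  (∑ j ∈ Finset.univ.filter (· ≤ k), (L j)⁻¹)⁻¹

/-- `G_{k,j} = L_eq(k)/L_j` if `j ≤ k`, else `0`. -/
noncomputable def Gmat {n : ℕ} (L : Fin (n + 1) → ℝ) : Matrix (Fin n) (Fin (n + 1)) ℝ :=
  fun k j => if (j : ℕ) ≤ (k : ℕ) then Leq L k.castSucc / L j else 0

/-- `Γ_m^⊺ = G − [0 | I]`. -/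
noncomputable def GammaT {n : ℕ} (L : Fin (n + 1) → ℝ) : Matrix (Fin n) (Fin (n + 1)) ℝ :=
  Gmat L - Matrix.of (fun (k : Fin n) (j : Fin (n + 1)) =>
    if (j : ℕ) = (k : ℕ) + 1 then 1 else 0)

/-- `Γ_m^+ := (diag(L)/L_eq(m)) Γ_m (Γ_m^⊺ (diag(L)/L_eq(m)) Γ_m)⁻¹`. -/
noncomputable def GammaPlus {n : ℕ} (L : Fin (n + 1) → ℝ) : Matrix (Fin (n + 1)) (Fin n) ℝ :=
  ((Leq L (Fin.last n))⁻¹ • Matrix.diagonal L) * (GammaT L)ᵀ *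
    (GammaT L * ((Leq L (Fin.last n))⁻¹ • Matrix.diagonal L) * (GammaT L)ᵀ)⁻¹

/-- The state change of coordinates `Φ⁻¹`, with rows `[Γ_m^⊺, 0]`,
`[𝟙^⊺ diag(L)⁻¹ L_eq(m), 0]`, `[0, 1]`: row index `Sum.inl k` with `k < n` is the
`k`-th Casimir row, row `Sum.inl n` (the last one) is the total-flux row, and
row `Sum.inr ()` is the charge row. -/
noncomputable def PhiInv {n : ℕ} (L : Fin (n + 1) → ℝ) :
    Matrix (Fin (n + 1) ⊕ Unit) (Fin (n + 1) ⊕ Unit) ℝ :=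
  fun i j =>
    match i, j with
    | Sum.inl k, Sum.inl j =>
        if h : (k : ℕ) < n then GammaT L ⟨k, h⟩ j else Leq L (Fin.last n) * (L j)⁻¹
    | Sum.inl _, Sum.inr _ => 0
    | Sum.inr _, Sum.inl _ => 0
    | Sum.inr _, Sum.inr _ => 1

/-- The claimed inverse `Φ`: first block column `Γ_m^+`, second block column
`(𝟙_m, 0)ᵀ`, third block column `(0_m, 1)ᵀ`. -/
noncomputable def Phi {n : ℕ} (L : Fin (n + 1) → ℝ) :
    Matrix (Fin (n + 1) ⊕ Unit) (Fin (n + 1) ⊕ Unit) ℝ :=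
  fun i j =>
    match i, j with
    | Sum.inl i, Sum.inl k =>
        if h : (k : ℕ) < n then GammaPlus L i ⟨k, h⟩ else 1
    | Sum.inl _, Sum.inr _ => 0
    | Sum.inr _, Sum.inl _ => 0
    | Sum.inr _, Sum.inr _ => 1

section Aux

variable {n : ℕ} {L : Fin (n + 1) → ℝ}

lemma leq_pos (hL : ∀ j, 0 < L j) (k : Fin (n + 1)) : 0 < Leq L k := by
  unfold Leq
  apply inv_pos.mpr
  apply Finset.sum_pos
  · intro j _
    exact inv_pos.mpr (hL j)
  · exact ⟨0, by simp [Fin.zero_le]⟩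

lemma sum_div_eq_one (hL : ∀ j, 0 < L j) (k : Fin (n + 1)) :
    ∑ j : Fin (n + 1), (if (j : ℕ) ≤ (k : ℕ) then Leq L k / L j else 0) = 1 := by
  have h1 : ∑ j : Fin (n + 1), (if (j : ℕ) ≤ (k : ℕ) then Leq L k / L j else 0)
      = Leq L k * ∑ j ∈ Finset.univ.filter (· ≤ k), (L j)⁻¹ := by
    rw [Finset.mul_sum, Finset.sum_filter]
    apply Finset.sum_congr rfl
    intro j _
    simp only [Fin.le_def, div_eq_mul_inv]
  rw [h1]
  unfold Leq
  apply inv_mul_cancel₀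
  apply ne_of_gt
  apply Finset.sum_pos
  · intro j _; exact inv_pos.mpr (hL j)
  · exact ⟨0, by simp [Fin.zero_le]⟩

lemma rowsum_gammaT (hL : ∀ j, 0 < L j) (k : Fin n) : ∑ j, GammaT L k j = 0 := by
  have h1 : ∑ j, Gmat L k j = 1 := by
    have := sum_div_eq_one hL (k.castSucc)
    simpa [Gmat, Fin.coe_castSucc] using this
  have h2 : ∑ j : Fin (n + 1), (if (j : ℕ) = (k : ℕ) + 1 then (1 : ℝ) else 0) = 1 := by
    have hc : ∀ j : Fin (n + 1), ((j : ℕ) = (k : ℕ) + 1) ↔ j = Fin.succ k := by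
      intro j; rw [Fin.ext_iff, Fin.val_succ]
    simp only [hc]
    simp
  simp only [GammaT, Matrix.sub_apply, Matrix.of_apply, Finset.sum_sub_distrib, h1, h2, sub_self]

lemma sum_last_row (hL : ∀ j, 0 < L j) :
    ∑ j, Leq L (Fin.last n) * (L j)⁻¹ = 1 := by
  have := sum_div_eq_one hL (Fin.last n)
  have h2 : ∀ j : Fin (n + 1), (j : ℕ) ≤ ((Fin.last n : Fin (n + 1)) : ℕ) := by
    intro j; simp [Fin.val_last, Nat.lt_succ_iff.mp j.isLt]
  simp only [if_pos (h2 _), div_eq_mul_inv] at this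
  exact this

lemma gammaT_transpose_mulVec_inj (hL : ∀ j, 0 < L j) (x : Fin n → ℝ)
    (hx : (GammaT L)ᵀ *ᵥ x = 0) : x = 0 := by
  have key : ∀ d : ℕ, ∀ k : Fin n, n - (k : ℕ) ≤ d → x k = 0 := by
    intro d
    induction d with
    | zero => intro k hk; have := k.isLt; omega
    | succ d ih =>
      intro k hk
      have h1 := congrFun hx (Fin.succ k)
      simp only [Matrix.mulVec, dotProduct, Matrix.transpose_apply, Pi.zero_apply] at h1
      rw [Finset.sum_eq_single k] at h1
      · have hco : GammaT L k (Fin.succ k) = -1 := by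
          simp [GammaT, Gmat, Fin.val_succ]
        rw [hco] at h1
        linarith
      · intro b _ hb
        by_cases hbk : (k : ℕ) + 1 ≤ (b : ℕ)
        · have hxb : x b = 0 := by
            apply ih
            omega
          rw [hxb, mul_zero]
        · have hco : GammaT L b (Fin.succ k) = 0 := by
            have hbk' : (b : ℕ) ≠ (k : ℕ) := fun h => hb (Fin.ext h)
            simp only [GammaT, Matrix.sub_apply, Gmat, Matrix.of_apply, Fin.val_succ]
            rw [if_neg (by omega), if_neg (by omega)]
            ring
          rw [hco, zero_mul]
      · intro h; exact absurd (Finset.mem_univ k) h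
  funext k
  exact key n k (Nat.sub_le _ _)

lemma gammaT_posdef (hL : ∀ j, 0 < L j) :
    (GammaT L * ((Leq L (Fin.last n))⁻¹ • Matrix.diagonal L) * (GammaT L)ᵀ).PosDef := by
  set c : ℝ := (Leq L (Fin.last n))⁻¹ with hc
  have hcpos : 0 < c := inv_pos.mpr (leq_pos hL _)
  have hDm : (c • Matrix.diagonal L).PosDef := by
    rw [← Matrix.diagonal_smul]
    exact Matrix.PosDef.diagonal (fun i => by
      simp only [Pi.smul_apply, smul_eq_mul]; exact mul_pos hcpos (hL i))
  refine Matrix.posDef_iff_dotProduct_mulVec.mpr ⟨?_, ?_⟩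
  · show _ᴴ = _
    rw [Matrix.conjTranspose_eq_transpose_of_trivial]
    rw [Matrix.transpose_mul, Matrix.transpose_mul, Matrix.transpose_transpose,
      Matrix.transpose_smul, Matrix.diagonal_transpose, Matrix.mul_assoc]
  · intro x hx
    have hy : (GammaT L)ᵀ *ᵥ x ≠ 0 := by
      intro h
      exact hx (gammaT_transpose_mulVec_inj hL x h)
    have := hDm.dotProduct_mulVec_pos hy
    rw [← Matrix.mulVec_mulVec, ← Matrix.mulVec_mulVec, Matrix.dotProduct_mulVec,
      ← Matrix.mulVec_transpose]
    simpa using this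

end Aux

theorem stmt4 (n : ℕ) (hn : 1 ≤ n) (L : Fin (n + 1) → ℝ) (hL : ∀ j, 0 < L j) :
    PhiInv L * Phi L = 1 ∧ Phi L * PhiInv L = 1 := by
  set Dm : Matrix (Fin (n + 1)) (Fin (n + 1)) ℝ := (Leq L (Fin.last n))⁻¹ • Matrix.diagonal L
    with hDm
  set M : Matrix (Fin n) (Fin n) ℝ := GammaT L * Dm * (GammaT L)ᵀ with hM
  have hMpos := gammaT_posdef (L := L) hL
  have hMinv : M * M⁻¹ = 1 :=
    Matrix.mul_nonsing_inv _ (Ne.isUnit hMpos.det_pos.ne')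
  have hGG : GammaT L * GammaPlus L = 1 := by
    unfold GammaPlus
    rw [← Matrix.mul_assoc, ← Matrix.mul_assoc]
    exact hMinv
  -- the "total flux" row annihilates `GammaPlus`
  have hw : (fun i => Leq L (Fin.last n) * (L i)⁻¹) ᵥ* GammaPlus L = 0 := by
    unfold GammaPlus
    rw [← Matrix.vecMul_vecMul, ← Matrix.vecMul_vecMul]
    have h1 : (fun i => Leq L (Fin.last n) * (L i)⁻¹) ᵥ* Dm = fun _ => 1 := by
      funext i
      rw [hDm, ← Matrix.diagonal_smul, Matrix.vecMul_diagonal, Pi.smul_apply, smul_eq_mul]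
      have hLi := (hL i).ne'
      have hLeq := (leq_pos hL (Fin.last n)).ne'
      field_simp
    rw [h1]
    have h2 : (fun (_ : Fin (n + 1)) => (1 : ℝ)) ᵥ* (GammaT L)ᵀ = 0 := by
      funext k
      simp only [Matrix.vecMul, dotProduct, Matrix.transpose_apply, one_mul,
        Pi.zero_apply]
      exact rowsum_gammaT hL k
    rw [h2, Matrix.zero_vecMul]
  have key : PhiInv L * Phi L = 1 := by
    ext i j
    rw [Matrix.mul_apply, Fintype.sum_sum_type]
    cases i with
    | inl k =>
      cases j with
      | inl j =>
        simp only [PhiInv, Phi, mul_zero, Finset.sum_const, Finset.card_univ,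
          Fintype.card_unit, one_smul, smul_zero, add_zero]
        have hone : (1 : Matrix (Fin (n + 1) ⊕ Unit) (Fin (n + 1) ⊕ Unit) ℝ)
            (Sum.inl k) (Sum.inl j) = if (k : ℕ) = (j : ℕ) then 1 else 0 := by
          simp [Matrix.one_apply, Fin.ext_iff]
        rw [hone]
        by_cases hk : (k : ℕ) < n <;> by_cases hj : (j : ℕ) < n
        · simp only [dif_pos hk, dif_pos hj]
          have : ∑ i, GammaT L ⟨k, hk⟩ i * GammaPlus L i ⟨j, hj⟩
              = (GammaT L * GammaPlus L) ⟨k, hk⟩ ⟨j, hj⟩ := (Matrix.mul_apply).symm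
          rw [this, hGG]
          simp [Matrix.one_apply, Fin.ext_iff]
        · simp only [dif_pos hk, dif_neg hj, mul_one]
          rw [if_neg (by omega)]
          exact rowsum_gammaT hL ⟨k, hk⟩
        · simp only [dif_neg hk, dif_pos hj]
          rw [if_neg (by omega)]
          have := congrFun hw ⟨j, hj⟩
          simpa [Matrix.vecMul, dotProduct] using this
        · simp only [dif_neg hk, dif_neg hj, mul_one]
          rw [if_pos (by omega)]
          exact sum_last_row hL
      | inr u =>
        simp [PhiInv, Phi, Matrix.one_apply]
    | inr u =>
      cases j with
      | inl j => simp [PhiInv, Phi, Matrix.one_apply]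
      | inr v => simp [PhiInv, Phi, Matrix.one_apply]
  exact ⟨key, mul_eq_one_comm.mp key⟩
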